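/- arXiv:2007.02497 — 2 statements merged into one kernel-verified Lean document; each statement's English description precedes it below -/
import Mathlib

section
/- Every antisymmetric β : Fin 7 → Fin 7 → ℝ can be written uniquely as β_{ab} = ∑_{k} X_k φ_{kab} + γ_{ab}, where X ∈ ℝ⁷ and γ is antisymmetric with ∑_{i,j} γ_{ij} φ_{ijk} = 0 for all k; moreover X is given explicitly by X_k = (1/6) ∑_{i,j} β_{ij} φ_{ijk}. (This is the splitting Ω² = Ω²₇ ⊕ Ω²₁₄, and the algebraic content of Proposition 2.2: the Ω²₇-component of a 2-form β equals (1/3)·w⌟φ where w_k = (1/2)∑ β_{ij} φ_{ijk}.) -/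
open scoped BigOperators

/-- Antisymmetrized elementary tensor on `ℝ⁷`: value `sign σ` at `v ∘ σ`, zero elsewhere. -/
noncomputable def altE {n : ℕ} (v w : Fin n → Fin 7) : ℝ :=
  ∑ σ : Equiv.Perm (Fin n), ((Equiv.Perm.sign σ : ℤ) : ℝ) * (if w = v ∘ σ then 1 else 0)

/-- The G₂ 3-form `φ = e^{123}+e^{145}−e^{167}+e^{246}+e^{257}+e^{347}−e^{356}` (0-indexed). -/
noncomputable def phi (i j k : Fin 7) : ℝ :=
  altE ![0,1,2] ![i,j,k] + altE ![0,3,4] ![i,j,k] - altE ![0,5,6] ![i,j,k]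
    + altE ![1,3,5] ![i,j,k] + altE ![1,4,6] ![i,j,k] + altE ![2,3,6] ![i,j,k]
    - altE ![2,4,5] ![i,j,k]

/-- The dual 4-form `ψ = ∗φ = −e^{4567}−e^{2367}+e^{2345}−e^{1357}−e^{1346}−e^{1256}+e^{1247}`
(0-indexed). -/
noncomputable def psi (i j k l : Fin 7) : ℝ :=
  - altE ![3,4,5,6] ![i,j,k,l] - altE ![1,2,5,6] ![i,j,k,l] + altE ![1,2,3,4] ![i,j,k,l]
    - altE ![0,2,4,6] ![i,j,k,l] - altE ![0,2,3,5] ![i,j,k,l] - altE ![0,1,4,5] ![i,j,k,l]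
    + altE ![0,1,3,6] ![i,j,k,l]

/-- Kronecker delta on `Fin 7`. -/
noncomputable def kdelta (i j : Fin 7) : ℝ := if i = j then 1 else 0


def altEI {n : ℕ} (v w : Fin n → Fin 7) : ℤ :=
  ∑ σ : Equiv.Perm (Fin n), (Equiv.Perm.sign σ : ℤ) * (if w = v ∘ σ then 1 else 0)

def phiI (i j k : Fin 7) : ℤ :=
  altEI ![0,1,2] ![i,j,k] + altEI ![0,3,4] ![i,j,k] - altEI ![0,5,6] ![i,j,k]
    + altEI ![1,3,5] ![i,j,k] + altEI ![1,4,6] ![i,j,k] + altEI ![2,3,6] ![i,j,k]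
    - altEI ![2,4,5] ![i,j,k]

def phiT : Fin 7 → Fin 7 → Fin 7 → ℤ :=
  ![![![0, 0, 0, 0, 0, 0, 0], ![0, 0, 1, 0, 0, 0, 0], ![0, -1, 0, 0, 0, 0, 0], ![0, 0, 0, 0, 1, 0, 0], ![0, 0, 0, -1, 0, 0, 0], ![0, 0, 0, 0, 0, 0, -1], ![0, 0, 0, 0, 0, 1, 0]],
    ![![0, 0, -1, 0, 0, 0, 0], ![0, 0, 0, 0, 0, 0, 0], ![1, 0, 0, 0, 0, 0, 0], ![0, 0, 0, 0, 0, 1, 0], ![0, 0, 0, 0, 0, 0, 1], ![0, 0, 0, -1, 0, 0, 0], ![0, 0, 0, 0, -1, 0, 0]],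
    ![![0, 1, 0, 0, 0, 0, 0], ![-1, 0, 0, 0, 0, 0, 0], ![0, 0, 0, 0, 0, 0, 0], ![0, 0, 0, 0, 0, 0, 1], ![0, 0, 0, 0, 0, -1, 0], ![0, 0, 0, 0, 1, 0, 0], ![0, 0, 0, -1, 0, 0, 0]],
    ![![0, 0, 0, 0, -1, 0, 0], ![0, 0, 0, 0, 0, -1, 0], ![0, 0, 0, 0, 0, 0, -1], ![0, 0, 0, 0, 0, 0, 0], ![1, 0, 0, 0, 0, 0, 0], ![0, 1, 0, 0, 0, 0, 0], ![0, 0, 1, 0, 0, 0, 0]],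
    ![![0, 0, 0, 1, 0, 0, 0], ![0, 0, 0, 0, 0, 0, -1], ![0, 0, 0, 0, 0, 1, 0], ![-1, 0, 0, 0, 0, 0, 0], ![0, 0, 0, 0, 0, 0, 0], ![0, 0, -1, 0, 0, 0, 0], ![0, 1, 0, 0, 0, 0, 0]],
    ![![0, 0, 0, 0, 0, 0, 1], ![0, 0, 0, 1, 0, 0, 0], ![0, 0, 0, 0, -1, 0, 0], ![0, -1, 0, 0, 0, 0, 0], ![0, 0, 1, 0, 0, 0, 0], ![0, 0, 0, 0, 0, 0, 0], ![-1, 0, 0, 0, 0, 0, 0]],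
    ![![0, 0, 0, 0, 0, -1, 0], ![0, 0, 0, 0, 1, 0, 0], ![0, 0, 0, 1, 0, 0, 0], ![0, 0, -1, 0, 0, 0, 0], ![0, -1, 0, 0, 0, 0, 0], ![1, 0, 0, 0, 0, 0, 0], ![0, 0, 0, 0, 0, 0, 0]]]


set_option maxHeartbeats 4000000 in
lemma phiI_eq_phiT : ∀ i j k, phiI i j k = phiT i j k := by decide

lemma altE_cast {n : ℕ} (v w : Fin n → Fin 7) : altE v w = ((altEI v w : ℤ) : ℝ) := by
  unfold altE altEI
  push_cast [apply_ite (Int.cast : ℤ → ℝ)]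
  rfl

lemma phi_eqT : ∀ i j k, phi i j k = ((phiT i j k : ℤ) : ℝ) := by
  intro i j k
  rw [← phiI_eq_phiT]
  simp only [phi, phiI, altE_cast]
  push_cast
  ring

lemma phiT_anti : ∀ k i j, phiT k i j = - phiT k j i := by decide

lemma phiT_cyc : ∀ k i j, phiT k i j = phiT i j k := by decide

set_option maxHeartbeats 1000000 in
lemma phiT_contract : ∀ a b : Fin 7,
    (∑ i, ∑ j, phiT i j a * phiT i j b) = if a = b then 6 else 0 := by decide

lemma phi_anti {k i j : Fin 7} : phi k i j = - phi k j i := by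
  simp only [phi_eqT]
  rw [phiT_anti]
  push_cast
  ring

lemma phi_cyc {k i j : Fin 7} : phi k i j = phi i j k := by
  simp only [phi_eqT]
  rw [phiT_cyc]

lemma phi_contract (a b : Fin 7) :
    ∑ i, ∑ j, phi i j a * phi i j b = if a = b then (6:ℝ) else 0 := by
  simp only [phi_eqT, ← Int.cast_mul, ← Int.cast_sum]
  rw [phiT_contract a b]
  split <;> norm_num

lemma contractX (X : Fin 7 → ℝ) (k : Fin 7) :
    ∑ i, ∑ j, (∑ m, X m * phi m i j) * phi i j k = 6 * X k := by
  have h1 : ∀ i j : Fin 7, (∑ m, X m * phi m i j) * phi i j k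
      = ∑ m, X m * (phi i j m * phi i j k) := by
    intro i j
    rw [Finset.sum_mul]
    refine Finset.sum_congr rfl fun m _ => ?_
    rw [phi_cyc (k := m) (i := i) (j := j)]
    ring
  simp only [h1]
  rw [show (∑ i, ∑ j, ∑ m, X m * (phi i j m * phi i j k))
      = ∑ m, ∑ i, ∑ j, X m * (phi i j m * phi i j k) from by
    calc ∑ i, ∑ j, ∑ m, X m * (phi i j m * phi i j k)
        = ∑ i, ∑ m, ∑ j, X m * (phi i j m * phi i j k) :=
          Finset.sum_congr rfl fun i _ => Finset.sum_comm
      _ = ∑ m, ∑ i, ∑ j, X m * (phi i j m * phi i j k) := Finset.sum_comm]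
  have h2 : ∀ m : Fin 7, (∑ i, ∑ j, X m * (phi i j m * phi i j k))
      = X m * (if m = k then (6:ℝ) else 0) := by
    intro m
    rw [← phi_contract m k]
    simp [Finset.mul_sum]
  simp only [h2]
  rw [Finset.sum_eq_single k]
  · simp [mul_comm]
  · intro m _ hm; simp [hm]
  · simp

/-- The splitting `Ω² = Ω²₇ ⊕ Ω²₁₄`: every antisymmetric 2-tensor `β` is uniquely
`β_{ab} = ∑_k X_k φ_{kab} + γ_{ab}` with `γ` antisymmetric satisfying `∑ γ_{ij} φ_{ijk} = 0`;
moreover `X_k = (1/6) ∑ β_{ij} φ_{ijk}`. -/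
theorem two_form_splitting (β : Fin 7 → Fin 7 → ℝ)
    (hanti : ∀ i j, β i j = - β j i) :
    (∃! p : (Fin 7 → ℝ) × (Fin 7 → Fin 7 → ℝ),
      (∀ i j, p.2 i j = - p.2 j i) ∧
      (∀ k, ∑ i, ∑ j, p.2 i j * phi i j k = 0) ∧
      (∀ a b, β a b = (∑ k, p.1 k * phi k a b) + p.2 a b)) ∧
    (∀ (X : Fin 7 → ℝ) (γ : Fin 7 → Fin 7 → ℝ),
      (∀ i j, γ i j = - γ j i) →
      (∀ k, ∑ i, ∑ j, γ i j * phi i j k = 0) →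
      (∀ a b, β a b = (∑ k, X k * phi k a b) + γ a b) →
      ∀ k, X k = (1/6) * ∑ i, ∑ j, β i j * phi i j k) := by
  classical
  set Xd : Fin 7 → ℝ := fun k => (1/6) * ∑ i, ∑ j, β i j * phi i j k with hXd
  set γd : Fin 7 → Fin 7 → ℝ := fun a b => β a b - ∑ m, Xd m * phi m a b with hγd
  have hdec : ∀ a b, β a b = (∑ k, Xd k * phi k a b) + γd a b := by
    intro a b; simp [hγd]
  have hγanti : ∀ i j, γd i j = - γd j i := by
    intro i j
    simp only [hγd]
    rw [hanti i j]
    have h : ∀ m : Fin 7, Xd m * phi m i j = -(Xd m * phi m j i) := by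
      intro m; rw [phi_anti]; ring
    rw [Finset.sum_congr rfl fun m _ => h m, Finset.sum_neg_distrib]
    ring
  have hγ0 : ∀ k, ∑ i, ∑ j, γd i j * phi i j k = 0 := by
    intro k
    have h1 : ∀ i j : Fin 7, γd i j * phi i j k
        = β i j * phi i j k - (∑ m, Xd m * phi m i j) * phi i j k := by
      intro i j; simp only [hγd]; ring
    simp only [h1, Finset.sum_sub_distrib]
    rw [contractX Xd k]
    have hS : Xd k = (1/6) * ∑ i, ∑ j, β i j * phi i j k := by rw [hXd]
    rw [hS]; ring
  have huniq : ∀ (X : Fin 7 → ℝ) (γ : Fin 7 → Fin 7 → ℝ),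
      (∀ k, ∑ i, ∑ j, γ i j * phi i j k = 0) →
      (∀ a b, β a b = (∑ k, X k * phi k a b) + γ a b) →
      ∀ k, X k = (1/6) * ∑ i, ∑ j, β i j * phi i j k := by
    intro X γ h2 h3 k
    have key : ∑ i, ∑ j, β i j * phi i j k = 6 * X k := by
      have h : ∀ i j : Fin 7, β i j * phi i j k
          = (∑ m, X m * phi m i j) * phi i j k + γ i j * phi i j k := by
        intro i j; rw [h3 i j]; ring
      simp only [h, Finset.sum_add_distrib]
      rw [contractX X k, h2 k]; ring
    rw [key]; ring
  constructor
  · refine ⟨⟨Xd, γd⟩, ⟨hγanti, hγ0, hdec⟩, ?_⟩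
    rintro ⟨X, γ⟩ ⟨h1, h2, h3⟩
    have hX : X = Xd := by
      funext k
      rw [huniq X γ h2 h3 k, hXd]
    have hγ : γ = γd := by
      funext a b
      have h4 := h3 a b
      rw [hX] at h4
      have h5 := hdec a b
      simp only [hγd]
      linarith
    rw [hX, hγ]
  · intro X γ h1 h2 h3
    exact huniq X γ h2 h3
end

section
/- The real vector space su(3) ⊕ su(2) is the internal direct sum su(2)_d ⊕ ℝ·C ⊕ m of the diagonal subalgebra su(2)_d, the line spanned by C, and the 7-dimensional subspace m = span_ℝ{e₁,…,e₇}, and these three subspaces are pairwise orthogonal with respect to the Killing form B. -/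
open Complex Matrix

/-- 3×3 complex matrices. -/
abbrev M3 := Matrix (Fin 3) (Fin 3) ℂ
/-- 2×2 complex matrices. -/
abbrev M2 := Matrix (Fin 2) (Fin 2) ℂ

/-- The Killing form of `su(3) ⊕ su(2)`:
`B((X₁,X₂),(Y₁,Y₂)) = 6 Re tr(X₁Y₁) + 4 Re tr(X₂Y₂)`. -/
noncomputable def killingB (x y : M3 × M2) : ℝ :=
  6 * ((x.1 * y.1).trace).re + 4 * ((x.2 * y.2).trace).re

/-- The real Lie algebra `su(3)` of traceless skew-Hermitian 3×3 matrices,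
as a real subspace of `M3`. -/
noncomputable def su3 : Submodule ℝ M3 where
  carrier := {X | Xᴴ = -X ∧ X.trace = 0}
  zero_mem' := by constructor <;> simp
  add_mem' := by
    rintro a b ⟨ha1, ha2⟩ ⟨hb1, hb2⟩
    exact ⟨by rw [conjTranspose_add, ha1, hb1, neg_add], by rw [trace_add, ha2, hb2, add_zero]⟩
  smul_mem' := by
    rintro c a ⟨ha1, ha2⟩
    constructor
    · rw [conjTranspose_smul, ha1, star_trivial, smul_neg]
    · rw [trace_smul, ha2, smul_zero]

/-- The real Lie algebra `su(2)` of traceless skew-Hermitian 2×2 matrices,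
as a real subspace of `M2`. -/
noncomputable def su2 : Submodule ℝ M2 where
  carrier := {X | Xᴴ = -X ∧ X.trace = 0}
  zero_mem' := by constructor <;> simp
  add_mem' := by
    rintro a b ⟨ha1, ha2⟩ ⟨hb1, hb2⟩
    exact ⟨by rw [conjTranspose_add, ha1, hb1, neg_add], by rw [trace_add, ha2, hb2, add_zero]⟩
  smul_mem' := by
    rintro c a ⟨ha1, ha2⟩
    constructor
    · rw [conjTranspose_smul, ha1, star_trivial, smul_neg]
    · rw [trace_smul, ha2, smul_zero]

/-- The embedding of a 2×2 matrix as the top-left block of a 3×3 matrix. -/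
def embed (a : M2) : M3 := !![a 0 0, a 0 1, 0; a 1 0, a 1 1, 0; 0, 0, 0]

lemma embed_add (a b : M2) : embed (a + b) = embed a + embed b := by
  ext i j
  fin_cases i <;> fin_cases j <;> simp [embed, Matrix.vecHead, Matrix.vecTail]

lemma embed_smul (c : ℝ) (a : M2) : embed (c • a) = c • embed a := by
  ext i j
  fin_cases i <;> fin_cases j <;> simp [embed, Matrix.vecHead, Matrix.vecTail]

lemma embed_zero : embed 0 = 0 := by
  ext i j
  fin_cases i <;> fin_cases j <;> simp [embed, Matrix.vecHead, Matrix.vecTail]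

/-- The diagonal subalgebra `su(2)_d = {(ā, a) : a ∈ su(2)} ⊆ su(3) ⊕ su(2)`,
as a real subspace of `M3 × M2`. -/
noncomputable def su2d : Submodule ℝ (M3 × M2) where
  carrier := {p | ∃ a : M2, aᴴ = -a ∧ a.trace = 0 ∧ p = (embed a, a)}
  zero_mem' := ⟨0, by simp, by simp, Prod.ext (by simp [embed_zero]) (by simp)⟩
  add_mem' := by
    rintro p q ⟨a, ha1, ha2, rfl⟩ ⟨b, hb1, hb2, rfl⟩
    refine ⟨a + b, ?_, ?_, ?_⟩
    · rw [conjTranspose_add, ha1, hb1, neg_add]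
    · rw [trace_add, ha2, hb2, add_zero]
    · rw [embed_add, Prod.mk_add_mk]
  smul_mem' := by
    rintro c p ⟨a, ha1, ha2, rfl⟩
    refine ⟨c • a, ?_, ?_, ?_⟩
    · rw [conjTranspose_smul, ha1, star_trivial, smul_neg]
    · rw [trace_smul, ha2, smul_zero]
    · rw [embed_smul, Prod.smul_mk]

noncomputable def Imat : M2 := !![I, 0; 0, -I]
noncomputable def Jmat : M2 := !![0, -1; 1, 0]
noncomputable def Kmat : M2 := !![0, I; I, 0]

/-- The element `C = (diag(i, i, −2i), 0)`. -/
noncomputable def Celt : M3 × M2 := (!![I, 0, 0; 0, I, 0; 0, 0, -2*I], 0)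

/-- The line `ℝ·C`. -/
noncomputable def lineC : Submodule ℝ (M3 × M2) := Submodule.span ℝ {Celt}

/-- The seven elements `e₁,…,e₇` of `su(3) ⊕ su(2)` (0-indexed as `e 0,…,e 6`). -/
noncomputable def e : Fin 7 → M3 × M2 := ![
  (1/3 : ℝ) • ((!![2*I, 0, 0; 0, -2*I, 0; 0, 0, 0], (-3 : ℝ) • Imat) : M3 × M2),
  (1/3 : ℝ) • ((!![0, -2, 0; 2, 0, 0; 0, 0, 0], (-3 : ℝ) • Jmat) : M3 × M2),
  (1/3 : ℝ) • ((!![0, 2*I, 0; 2*I, 0, 0; 0, 0, 0], (-3 : ℝ) • Kmat) : M3 × M2),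
  (Real.sqrt 5 / 3) • ((!![0, 0, (Real.sqrt 2 : ℂ); 0, 0, 0; -(Real.sqrt 2 : ℂ), 0, 0],
    0) : M3 × M2),
  (Real.sqrt 5 / 3) • ((!![0, 0, (Real.sqrt 2 : ℂ) * I; 0, 0, 0; (Real.sqrt 2 : ℂ) * I, 0, 0],
    0) : M3 × M2),
  (Real.sqrt 5 / 3) • ((!![0, 0, 0; 0, 0, (Real.sqrt 2 : ℂ); 0, -(Real.sqrt 2 : ℂ), 0],
    0) : M3 × M2),
  (Real.sqrt 5 / 3) • ((!![0, 0, 0; 0, 0, (Real.sqrt 2 : ℂ) * I; 0, (Real.sqrt 2 : ℂ) * I, 0],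
    0) : M3 × M2)]

/-- The 7-dimensional subspace `m = span_ℝ{e₁,…,e₇}`. -/
noncomputable def msub : Submodule ℝ (M3 × M2) := Submodule.span ℝ (Set.range e)

section Helpers

lemma killingB_symm (x y : M3 × M2) : killingB x y = killingB y x := by
  unfold killingB
  rw [Matrix.trace_mul_comm, Matrix.trace_mul_comm x.2]

lemma killingB_add_right (x y z : M3 × M2) :
    killingB x (y + z) = killingB x y + killingB x z := by
  simp [killingB, Matrix.mul_add]; ring

lemma killingB_smul_right (c : ℝ) (x y : M3 × M2) :
    killingB x (c • y) = c * killingB x y := by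
  simp [killingB, Matrix.mul_smul, Complex.smul_re]; ring

lemma killingB_zero_right (x : M3 × M2) : killingB x 0 = 0 := by
  simp [killingB]

lemma mem_su3_iff (X : M3) : X ∈ su3 ↔ Xᴴ = -X ∧ X.trace = 0 := Iff.rfl
lemma mem_su2_iff (X : M2) : X ∈ su2 ↔ Xᴴ = -X ∧ X.trace = 0 := Iff.rfl

lemma trace_sq_skew {n : ℕ} (X : Matrix (Fin n) (Fin n) ℂ) (h : Xᴴ = -X) :
    ((X * X).trace).re = -∑ i, ∑ j, Complex.normSq (X i j) := by
  have hij : ∀ i j : Fin n, X j i = -(starRingEnd ℂ) (X i j) := by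
    intro i j
    have := congrFun (congrFun h j) i
    simp [Matrix.conjTranspose_apply] at this
    rw [this]; ring
  have : (X * X).trace = ∑ i, ∑ j, -(Complex.normSq (X i j) : ℂ) := by
    rw [Matrix.trace]
    refine Finset.sum_congr rfl fun i _ => ?_
    rw [Matrix.diag_apply, Matrix.mul_apply]
    refine Finset.sum_congr rfl fun j _ => ?_
    rw [hij i j, mul_neg, Complex.mul_conj]
  rw [this]
  simp


lemma sum_normSq_zero {n : ℕ} (X : Matrix (Fin n) (Fin n) ℂ)
    (h : ∑ i, ∑ j, Complex.normSq (X i j) = 0) : X = 0 := by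
  ext i j
  have h1 := (Finset.sum_eq_zero_iff_of_nonneg (fun i _ => Finset.sum_nonneg
    (fun j _ => Complex.normSq_nonneg (X i j)))).mp h i (Finset.mem_univ i)
  have h2 := (Finset.sum_eq_zero_iff_of_nonneg
    (fun j _ => Complex.normSq_nonneg (X i j))).mp h1 j (Finset.mem_univ j)
  simpa using Complex.normSq_eq_zero.mp h2

lemma killing_definite (p : M3 × M2) (h1 : p.1ᴴ = -p.1) (h2 : p.2ᴴ = -p.2)
    (h : killingB p p = 0) : p = 0 := by
  have t1 := trace_sq_skew p.1 h1
  have t2 := trace_sq_skew p.2 h2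
  unfold killingB at h
  rw [t1, t2] at h
  have s1 : (0:ℝ) ≤ ∑ i, ∑ j, Complex.normSq (p.1 i j) :=
    Finset.sum_nonneg (fun i _ => Finset.sum_nonneg (fun j _ => Complex.normSq_nonneg _))
  have s2 : (0:ℝ) ≤ ∑ i, ∑ j, Complex.normSq (p.2 i j) :=
    Finset.sum_nonneg (fun i _ => Finset.sum_nonneg (fun j _ => Complex.normSq_nonneg _))
  have z1 : ∑ i, ∑ j, Complex.normSq (p.1 i j) = 0 := by linarith
  have z2 : ∑ i, ∑ j, Complex.normSq (p.2 i j) = 0 := by linarith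
  have e1 := sum_normSq_zero p.1 z1
  have e2 := sum_normSq_zero p.2 z2
  exact Prod.ext e1 e2

end Helpers
lemma ortho_su2d_Celt (a : M2) (ha2 : a.trace = 0) :
    killingB (embed a, a) Celt = 0 := by
  have ht : a 0 0 + a 1 1 = 0 := by
    simpa [Matrix.trace, Matrix.diag, Fin.sum_univ_succ] using ha2
  have htre := congrArg Complex.re ht
  have htim := congrArg Complex.im ht
  simp [Complex.ext_iff] at htre htim
  simp [killingB, Celt, embed, Matrix.trace, Matrix.diag, Matrix.mul_apply,
    Fin.sum_univ_succ, Complex.add_re, Complex.mul_re, Complex.mul_im, Complex.I_re,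
    Complex.I_im]
  linarith
lemma e_val0 : e 0 = (1/3 : ℝ) • ((!![2*I, 0, 0; 0, -2*I, 0; 0, 0, 0], (-3 : ℝ) • Imat) : M3 × M2) := rfl
lemma e_val1 : e 1 = (1/3 : ℝ) • ((!![0, -2, 0; 2, 0, 0; 0, 0, 0], (-3 : ℝ) • Jmat) : M3 × M2) := rfl
lemma e_val2 : e 2 = (1/3 : ℝ) • ((!![0, 2*I, 0; 2*I, 0, 0; 0, 0, 0], (-3 : ℝ) • Kmat) : M3 × M2) := rfl
lemma e_val3 : e 3 = (Real.sqrt 5 / 3) • ((!![0, 0, (Real.sqrt 2 : ℂ); 0, 0, 0; -(Real.sqrt 2 : ℂ), 0, 0], 0) : M3 × M2) := rfl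
lemma e_val4 : e 4 = (Real.sqrt 5 / 3) • ((!![0, 0, (Real.sqrt 2 : ℂ) * I; 0, 0, 0; (Real.sqrt 2 : ℂ) * I, 0, 0], 0) : M3 × M2) := rfl
lemma e_val5 : e 5 = (Real.sqrt 5 / 3) • ((!![0, 0, 0; 0, 0, (Real.sqrt 2 : ℂ); 0, -(Real.sqrt 2 : ℂ), 0], 0) : M3 × M2) := rfl
lemma e_val6 : e 6 = (Real.sqrt 5 / 3) • ((!![0, 0, 0; 0, 0, (Real.sqrt 2 : ℂ) * I; 0, (Real.sqrt 2 : ℂ) * I, 0], 0) : M3 × M2) := rfl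

lemma killingB_smul_zero (x : M3 × M2) (c : ℝ) (y : M3 × M2) (h : killingB x y = 0) :
    killingB x (c • y) = 0 := by rw [killingB_smul_right, h, mul_zero]

lemma ortho_su2d_e (a : M2) (k : Fin 7) :
    killingB (embed a, a) (e k) = 0 := by
  fin_cases k <;> refine killingB_smul_zero _ _ _ ?_ <;>
  · simp [killingB, embed, Celt, Imat, Jmat, Kmat, Matrix.trace, Matrix.diag, Matrix.mul_apply, Fin.sum_univ_succ, Matrix.smul_apply, Complex.ext_iff, Complex.add_re, Complex.add_im, Complex.mul_re, Complex.mul_im, Complex.I_re, Complex.I_im, Complex.smul_re, Complex.smul_im, Complex.ofReal_re, Complex.ofReal_im, smul_eq_mul]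
    try ring

lemma ortho_Celt_e (k : Fin 7) : killingB Celt (e k) = 0 := by
  fin_cases k <;> refine killingB_smul_zero _ _ _ ?_ <;>
  · simp [killingB, embed, Celt, Imat, Jmat, Kmat, Matrix.trace, Matrix.diag, Matrix.mul_apply, Fin.sum_univ_succ, Matrix.smul_apply, Complex.ext_iff, Complex.add_re, Complex.add_im, Complex.mul_re, Complex.mul_im, Complex.I_re, Complex.I_im, Complex.smul_re, Complex.smul_im, Complex.ofReal_re, Complex.ofReal_im, smul_eq_mul]
    try ring
lemma killingB_zero_of_span (x : M3 × M2) (S : Set (M3 × M2))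
    (h : ∀ s ∈ S, killingB x s = 0) :
    ∀ y ∈ Submodule.span ℝ S, killingB x y = 0 := by
  intro y hy
  induction hy using Submodule.span_induction with
  | mem z hz => exact h z hz
  | zero => exact killingB_zero_right x
  | add y z _ _ hy hz => rw [killingB_add_right, hy, hz, add_zero]
  | smul c y _ hy => rw [killingB_smul_right, hy, mul_zero]

lemma ortho_su2d_lineC : ∀ x ∈ su2d, ∀ y ∈ lineC, killingB x y = 0 := by
  rintro x ⟨a, ha1, ha2, rfl⟩ y hy
  refine killingB_zero_of_span _ _ ?_ y hy
  rintro s rfl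
  exact ortho_su2d_Celt a ha2

lemma ortho_su2d_msub : ∀ x ∈ su2d, ∀ y ∈ msub, killingB x y = 0 := by
  rintro x ⟨a, ha1, ha2, rfl⟩ y hy
  refine killingB_zero_of_span _ _ ?_ y hy
  rintro s ⟨k, rfl⟩
  exact ortho_su2d_e a k

lemma ortho_lineC_msub : ∀ x ∈ lineC, ∀ y ∈ msub, killingB x y = 0 := by
  intro x hx y hy
  rw [killingB_symm]
  have hy' : killingB y Celt = 0 := by
    rw [killingB_symm]
    exact killingB_zero_of_span Celt _ (by rintro s ⟨k, rfl⟩; exact ortho_Celt_e k) y hy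
  refine killingB_zero_of_span y _ ?_ x hx
  rintro s rfl
  exact hy'

lemma su2d_le : su2d ≤ su3.prod su2 := by
  rintro x ⟨a, ha1, ha2, rfl⟩
  have hconj : ∀ i j : Fin 2, (starRingEnd ℂ) (a j i) = -(a i j) := by
    intro i j; exact congrFun (congrFun ha1 i) j
  have htr : a 0 0 + a 1 1 = 0 := by
    simpa [Matrix.trace, Matrix.diag, Fin.sum_univ_succ] using ha2
  refine Submodule.mem_prod.mpr ⟨⟨?_, ?_⟩, ⟨ha1, ha2⟩⟩
  · ext i j
    fin_cases i <;> fin_cases j <;>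
      simp [embed, Matrix.conjTranspose_apply, hconj, Matrix.vecHead, Matrix.vecTail]
  · simp [embed, Matrix.trace, Matrix.diag, Fin.sum_univ_succ, htr, Matrix.vecHead, Matrix.vecTail]

lemma Celt_mem : Celt ∈ su3.prod su2 := by
  refine Submodule.mem_prod.mpr ⟨⟨?_, ?_⟩, ?_⟩
  · ext i j
    fin_cases i <;> fin_cases j <;>
      simp [Celt, Matrix.conjTranspose_apply, Matrix.vecHead, Matrix.vecTail, Complex.ext_iff]
  · simp [Celt, Matrix.trace, Matrix.diag, Fin.sum_univ_succ, Matrix.vecHead, Matrix.vecTail]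
    ring
  · simp [Celt, mem_su2_iff]

lemma lineC_le : lineC ≤ su3.prod su2 := by
  rw [lineC, Submodule.span_le]
  rintro s rfl
  exact Celt_mem

lemma e_mem (k : Fin 7) : e k ∈ su3.prod su2 := by
  fin_cases k <;> refine Submodule.smul_mem _ _ (Submodule.mem_prod.mpr ⟨⟨?_, ?_⟩, ⟨?_, ?_⟩⟩) <;>
  · first
    | (ext i j
       fin_cases i <;> fin_cases j <;>
         simp [Imat, Jmat, Kmat, Matrix.conjTranspose_apply, Matrix.smul_apply,
           Matrix.vecHead, Matrix.vecTail, Complex.ext_iff])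
    | (simp [Imat, Jmat, Kmat, Matrix.trace, Matrix.diag, Fin.sum_univ_succ,
        Matrix.smul_apply, Matrix.vecHead, Matrix.vecTail, Complex.ext_iff]
       try ring)

lemma msub_le : msub ≤ su3.prod su2 := by
  rw [msub, Submodule.span_le]
  rintro s ⟨k, rfl⟩
  exact e_mem k
lemma inter_bot_aux (x : M3 × M2) (hx : x ∈ su3.prod su2) (h : killingB x x = 0) : x = 0 := by
  obtain ⟨⟨h1, -⟩, ⟨h2, -⟩⟩ := Submodule.mem_prod.mp hx
  exact killing_definite x h1 h2 h

lemma int1 : su2d ⊓ (lineC ⊔ msub) = ⊥ := by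
  rw [eq_bot_iff]
  rintro x ⟨hx1, hx2⟩
  obtain ⟨y, hy, z, hz, hyz⟩ := Submodule.mem_sup.mp hx2
  rw [Submodule.mem_bot]
  refine inter_bot_aux x (su2d_le hx1) ?_
  calc killingB x x = killingB x (y + z) := by rw [hyz]
    _ = killingB x y + killingB x z := killingB_add_right x y z
    _ = 0 := by
        rw [ortho_su2d_lineC x hx1 y hy, ortho_su2d_msub x hx1 z hz, add_zero]

lemma int2 : lineC ⊓ (su2d ⊔ msub) = ⊥ := by
  rw [eq_bot_iff]
  rintro x ⟨hx1, hx2⟩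
  obtain ⟨y, hy, z, hz, hyz⟩ := Submodule.mem_sup.mp hx2
  rw [Submodule.mem_bot]
  refine inter_bot_aux x (lineC_le hx1) ?_
  calc killingB x x = killingB x y + killingB x z := by rw [← killingB_add_right, hyz]
    _ = 0 := by
        rw [killingB_symm x y, ortho_su2d_lineC y hy x hx1,
          ortho_lineC_msub x hx1 z hz, add_zero]

lemma int3 : msub ⊓ (su2d ⊔ lineC) = ⊥ := by
  rw [eq_bot_iff]
  rintro x ⟨hx1, hx2⟩
  obtain ⟨y, hy, z, hz, hyz⟩ := Submodule.mem_sup.mp hx2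
  rw [Submodule.mem_bot]
  refine inter_bot_aux x (msub_le hx1) ?_
  calc killingB x x = killingB x y + killingB x z := by rw [← killingB_add_right, hyz]
    _ = 0 := by
        rw [killingB_symm x y, ortho_su2d_msub y hy x hx1,
          killingB_symm x z, ortho_lineC_msub z hz x hx1, add_zero]

lemma Celt_ne : Celt ≠ 0 := by
  intro h
  have := congrFun (congrFun (congrArg Prod.fst h) 0) 0
  simp [Celt] at this

lemma finrank_lineC : Module.finrank ℝ lineC = 1 := finrank_span_singleton Celt_ne

lemma e_indep : LinearIndependent ℝ e := by
  rw [Fintype.linearIndependent_iff]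
  intro g hg
  rw [Fin.sum_univ_seven] at hg
  rw [e_val0, e_val1, e_val2, e_val3, e_val4, e_val5, e_val6] at hg
  have hs5 : Real.sqrt 5 ≠ 0 := by positivity
  have hs2 : Real.sqrt 2 ≠ 0 := by positivity
  have c1 := congrArg (fun p : M3 × M2 => p.2 0 0) hg
  have c2 := congrArg (fun p : M3 × M2 => p.2 0 1) hg
  have c3 := congrArg (fun p : M3 × M2 => p.1 0 2) hg
  have c4 := congrArg (fun p : M3 × M2 => p.1 1 2) hg
  simp [Imat, Jmat, Kmat, Matrix.smul_apply, Complex.ext_iff, smul_eq_mul, hs5, hs2]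
    at c1 c2 c3 c4
  intro i
  fin_cases i <;> simp <;> tauto
lemma finrank_msub : Module.finrank ℝ msub = 7 := by
  rw [msub, finrank_span_eq_card e_indep]
  simp
set_option maxHeartbeats 2000000 in
lemma sup_ge : su3.prod su2 ≤ su2d ⊔ lineC ⊔ msub := by
  rintro ⟨X, Y⟩ hp
  obtain ⟨⟨hX1, hX2⟩, hY1, hY2⟩ := Submodule.mem_prod.mp hp
  have hXc : ∀ i j : Fin 3, (X j i).re = -(X i j).re ∧ (X j i).im = (X i j).im := by
    intro i j
    have h := congrFun (congrFun hX1 i) j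
    simp [Matrix.conjTranspose_apply, Complex.ext_iff] at h
    exact ⟨h.1, by linarith [h.2]⟩
  have hYc : ∀ i j : Fin 2, (Y j i).re = -(Y i j).re ∧ (Y j i).im = (Y i j).im := by
    intro i j
    have h := congrFun (congrFun hY1 i) j
    simp [Matrix.conjTranspose_apply, Complex.ext_iff] at h
    exact ⟨h.1, by linarith [h.2]⟩
  have hXt : (X 0 0).im + (X 1 1).im + (X 2 2).im = 0 := by
    have h := congrArg Complex.im hX2
    simp [Matrix.trace, Matrix.diag, Fin.sum_univ_succ] at h
    linarith
  have hYt : (Y 0 0).im + (Y 1 1).im = 0 := by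
    have h := congrArg Complex.im hY2
    simp [Matrix.trace, Matrix.diag, Fin.sum_univ_succ] at h
    linarith
  have hX00 := hXc 0 0; have hX11 := hXc 1 1; have hX22 := hXc 2 2
  have hX01 := hXc 0 1; have hX02 := hXc 0 2; have hX12 := hXc 1 2
  have hY00 := hYc 0 0; have hY11 := hYc 1 1; have hY01 := hYc 0 1
  have hs : Real.sqrt 5 * Real.sqrt 2 = Real.sqrt 10 := by
    rw [← Real.sqrt_mul (by norm_num : (0:ℝ) ≤ 5)]; norm_num
  have h10 : Real.sqrt 10 * Real.sqrt 10 = 10 := Real.mul_self_sqrt (by norm_num)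
  set g0 : ℝ := (3/10) * ((X 0 0).im - (Y 0 0).im - (X 1 1).im + (Y 1 1).im) with hg0
  set g1 : ℝ := (3/5) * ((X 1 0).re - (Y 1 0).re) with hg1
  set g2 : ℝ := (3/5) * ((X 1 0).im - (Y 1 0).im) with hg2
  set tC : ℝ := -(X 2 2).im / 2 with htC
  set g3 : ℝ := (3/10) * Real.sqrt 10 * (X 0 2).re with hg3
  set g4 : ℝ := (3/10) * Real.sqrt 10 * (X 0 2).im with hg4
  set g5 : ℝ := (3/10) * Real.sqrt 10 * (X 1 2).re with hg5
  set g6 : ℝ := (3/10) * Real.sqrt 10 * (X 1 2).im with hg6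
  have f : ∀ x : ℝ, (3/10*Real.sqrt 10*x) * (Real.sqrt 5/3*Real.sqrt 2) = x := by
    intro x
    linear_combination ((1/10)*Real.sqrt 10*x) * hs + ((1/10)*x) * h10
  have f3 : g3 * (Real.sqrt 5 / 3 * Real.sqrt 2) = (X 0 2).re := by rw [hg3]; exact f _
  have f4 : g4 * (Real.sqrt 5 / 3 * Real.sqrt 2) = (X 0 2).im := by rw [hg4]; exact f _
  have f5 : g5 * (Real.sqrt 5 / 3 * Real.sqrt 2) = (X 1 2).re := by rw [hg5]; exact f _
  have f6 : g6 * (Real.sqrt 5 / 3 * Real.sqrt 2) = (X 1 2).im := by rw [hg6]; exact f _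
  set a : M2 := Y + g0 • Imat + g1 • Jmat + g2 • Kmat with ha
  have key : (X, Y) = (embed a, a) + tC • Celt +
      (g0 • e 0 + g1 • e 1 + g2 • e 2 + g3 • e 3 + g4 • e 4 + g5 • e 5 + g6 • e 6) := by
    rw [e_val0, e_val1, e_val2, e_val3, e_val4, e_val5, e_val6]
    refine Prod.ext ?_ ?_
    · show X = _
      ext i j
      fin_cases i <;> fin_cases j <;>
      · simp [ha, embed, Celt, Imat, Jmat, Kmat, Matrix.smul_apply, Matrix.add_apply,
          Complex.ext_iff, Complex.smul_re, Complex.smul_im, Complex.add_re, Complex.add_im,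
          Complex.mul_re, Complex.mul_im, Complex.I_re, Complex.I_im,
          Complex.ofReal_re, Complex.ofReal_im, smul_eq_mul,
          Matrix.vecHead, Matrix.vecTail]
        constructor <;>
          linarith [hX00.1, hX00.2, hX11.1, hX11.2, hX22.1, hX22.2, hX01.1, hX01.2,
              hX02.1, hX02.2, hX12.1, hX12.2,
              hY00.1, hY00.2, hY11.1, hY11.2, hY01.1, hY01.2, hXt, hYt,
              hg0, hg1, hg2, htC, hg3, hg4, hg5, hg6,
              f3, f4, f5, f6]
    · show Y = _
      ext i j
      fin_cases i <;> fin_cases j <;>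
      · simp [ha, Celt, Imat, Jmat, Kmat, Matrix.smul_apply, Matrix.add_apply,
          Complex.ext_iff, Complex.smul_re, Complex.smul_im, Complex.add_re, Complex.add_im,
          Complex.mul_re, Complex.mul_im, Complex.I_re, Complex.I_im,
          Complex.ofReal_re, Complex.ofReal_im, smul_eq_mul]
        try constructor <;> ring
  rw [key]
  have haskew : aᴴ = -a := by
    ext i j
    fin_cases i <;> fin_cases j <;>
    · simp [ha, Imat, Jmat, Kmat, Matrix.conjTranspose_apply, Matrix.smul_apply,
        Matrix.add_apply, Complex.ext_iff, Complex.smul_re, Complex.smul_im]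
      constructor <;>
        linarith [hY00.1, hY00.2, hY11.1, hY11.2, hY01.1, hY01.2]
  have hatr : a.trace = 0 := by
    simp [ha, Matrix.trace, Matrix.diag, Fin.sum_univ_succ, Matrix.add_apply,
      Matrix.smul_apply, Imat, Jmat, Kmat, Complex.ext_iff, Complex.smul_re, Complex.smul_im]
    constructor <;> linarith [hY00.1, hY11.1, hYt]
  refine add_mem (add_mem ?_ ?_) ?_
  · exact Submodule.mem_sup_left (Submodule.mem_sup_left ⟨a, haskew, hatr, rfl⟩)
  · exact Submodule.mem_sup_left (Submodule.mem_sup_right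
      (Submodule.smul_mem _ _ (Submodule.subset_span rfl)))
  · refine Submodule.mem_sup_right ?_
    refine add_mem (add_mem (add_mem (add_mem (add_mem (add_mem ?_ ?_) ?_) ?_) ?_) ?_) ?_ <;>
      exact Submodule.smul_mem _ _ (Submodule.subset_span ⟨_, rfl⟩)
/-- `su(3) ⊕ su(2)` is the internal direct sum `su(2)_d ⊕ ℝ·C ⊕ m`, and the three summands
are pairwise orthogonal with respect to the Killing form `B`. -/
theorem su3_su2_direct_sum_decomposition :
    (su2d ⊔ lineC ⊔ msub = su3.prod su2) ∧
    (su2d ⊓ (lineC ⊔ msub) = ⊥) ∧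
    (lineC ⊓ (su2d ⊔ msub) = ⊥) ∧
    (msub ⊓ (su2d ⊔ lineC) = ⊥) ∧
    (Module.finrank ℝ lineC = 1) ∧
    (Module.finrank ℝ msub = 7) ∧
    (∀ x ∈ su2d, ∀ y ∈ lineC, killingB x y = 0) ∧
    (∀ x ∈ su2d, ∀ y ∈ msub, killingB x y = 0) ∧
    (∀ x ∈ lineC, ∀ y ∈ msub, killingB x y = 0) := by
  exact ⟨le_antisymm (sup_le (sup_le su2d_le lineC_le) msub_le) sup_ge,
    int1, int2, int3, finrank_lineC, finrank_msub,
    ortho_su2d_lineC, ortho_su2d_msub, ortho_lineC_msub⟩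
end
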